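/- Let (A,B) be a monoidal resolvent pair (U : A → B monoidal, exact, faithful, with left adjoint F), where A is a tensor category (rigid monoidal with exact tensor product). Then the relatively projective objects of A form a tensor ideal: if P is relatively projective and V is any object, then V ⊗ P and P ⊗ V are relatively projective; moreover the duals P^∨ and ^∨P of a relatively projective object are relatively projective. -/

import Mathlib

open CategoryTheory CategoryTheory.Limits

universe v u v' u'

/-- A resolvent pair of abelian categories: an adjunction `F ⊣ U` where the right adjoint
`U : A ⥤ B` is additive, exact and faithful. -/
structure ResolventPair (A : Type u) [Category.{v} A] [Abelian A]
    (B : Type u') [Category.{v'} B] [Abelian B] where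
  /-- the left adjoint (e.g. induction) -/
  F : B ⥤ A
  /-- the right adjoint (e.g. restriction), assumed additive, exact and faithful -/
  U : A ⥤ B
  adj : F ⊣ U
  additive : U.Additive
  preservesFiniteLimits : PreservesFiniteLimits U
  preservesFiniteColimits : PreservesFiniteColimits U
  faithful : U.Faithful

namespace ResolventPair

variable {A : Type u} [Category.{v} A] [Abelian A]
  {B : Type u'} [Category.{v'} B] [Abelian B]

/-- A morphism `f` of `A` is allowable if `U f` admits a quasi-inverse `s`,
i.e. `U f ∘ s ∘ U f = U f`. -/
def Allowable (R : ResolventPair A B) {V W : A} (f : V ⟶ W) : Prop :=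
  ∃ s : R.U.obj W ⟶ R.U.obj V, R.U.map f ≫ s ≫ R.U.map f = R.U.map f

/-- An object `P` of `A` is relatively projective if every lifting problem against an
allowable epimorphism can be solved. -/
def RelProjective (R : ResolventPair A B) (P : A) : Prop :=
  ∀ ⦃V W : A⦄ (f : V ⟶ W), Epi f → R.Allowable f →
    ∀ g : P ⟶ W, ∃ h : P ⟶ V, h ≫ f = g

end ResolventPair

open MonoidalCategory

variable {A : Type u} [Category.{v} A] [Abelian A] {B : Type u'} [Category.{v'} B] [Abelian B]

/-- A retract of a relatively projective object is relatively projective. -/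
lemma relProjective_of_retract (R : ResolventPair A B) {P Q : A}
    (hQ : R.RelProjective Q) (i : P ⟶ Q) (r : Q ⟶ P) (hir : i ≫ r = 𝟙 P) :
    R.RelProjective P := by
  intro V W f hf ha g
  obtain ⟨h, hh⟩ := hQ f hf ha (r ≫ g)
  exact ⟨i ≫ h, by rw [Category.assoc, hh, ← Category.assoc, hir, Category.id_comp]⟩

section Monoidal

variable [MonoidalCategory A] [MonoidalCategory B]

lemma allowable_whiskerLeft (R : ResolventPair A B) [R.U.Monoidal]
    (Y : A) {V W : A} {f : V ⟶ W} (ha : R.Allowable f) :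
    R.Allowable (Y ◁ f) := by
  obtain ⟨s, hs⟩ := ha
  refine ⟨Functor.OplaxMonoidal.δ R.U Y W ≫ (R.U.obj Y ◁ s) ≫ Functor.LaxMonoidal.μ R.U Y V, ?_⟩
  simp only [Functor.Monoidal.map_whiskerLeft, Category.assoc,
    Functor.Monoidal.μ_δ_assoc]
  rw [← MonoidalCategory.whiskerLeft_comp_assoc, ← MonoidalCategory.whiskerLeft_comp_assoc,
    Category.assoc, hs]

lemma allowable_whiskerRight (R : ResolventPair A B) [R.U.Monoidal]
    {V W : A} {f : V ⟶ W} (ha : R.Allowable f) (Y : A) :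
    R.Allowable (f ▷ Y) := by
  obtain ⟨s, hs⟩ := ha
  refine ⟨Functor.OplaxMonoidal.δ R.U W Y ≫ (s ▷ R.U.obj Y) ≫ Functor.LaxMonoidal.μ R.U V Y, ?_⟩
  simp only [Functor.Monoidal.map_whiskerRight, Category.assoc,
    Functor.Monoidal.μ_δ_assoc]
  rw [← MonoidalCategory.comp_whiskerRight_assoc, ← MonoidalCategory.comp_whiskerRight_assoc,
    Category.assoc, hs]

variable [RigidCategory A]

lemma relProjective_whiskerLeft (R : ResolventPair A B) [R.U.Monoidal]
    {P : A} (hP : R.RelProjective P) (V : A) : R.RelProjective (V ⊗ P) := by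
  intro V' W f hf ha g
  -- transpose the lifting problem across the Frobenius adjunction
  have hepi : Epi ((ᘁV : A) ◁ f) := by
    have : PreservesColimitsOfSize.{0,0} (tensorLeft (ᘁV : A)) :=
      (tensorLeftAdjunction (ᘁ(ᘁV) : A) (ᘁV : A)).leftAdjoint_preservesColimits
    exact (tensorLeft (ᘁV : A)).map_epi f
  obtain ⟨h, hh⟩ := hP ((ᘁV : A) ◁ f) hepi (allowable_whiskerLeft R _ ha)
    (tensorLeftHomEquiv P (ᘁV : A) V W g)
  refine ⟨(tensorLeftHomEquiv P (ᘁV : A) V V').symm h, ?_⟩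
  apply (tensorLeftHomEquiv P (ᘁV : A) V W).injective
  rw [tensorLeftHomEquiv_naturality, Equiv.apply_symm_apply, hh]

lemma relProjective_whiskerRight (R : ResolventPair A B) [R.U.Monoidal]
    {P : A} (hP : R.RelProjective P) (V : A) : R.RelProjective (P ⊗ V) := by
  intro V' W f hf ha g
  have hepi : Epi (f ▷ (Vᘁ : A)) := by
    have : PreservesColimitsOfSize.{0,0} (tensorRight (Vᘁ : A)) :=
      (tensorRightAdjunction (Vᘁ : A) ((Vᘁ)ᘁ : A)).leftAdjoint_preservesColimits
    exact (tensorRight (Vᘁ : A)).map_epi f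
  obtain ⟨h, hh⟩ := hP (f ▷ (Vᘁ : A)) hepi (allowable_whiskerRight R ha _)
    (tensorRightHomEquiv P V (Vᘁ : A) W g)
  refine ⟨(tensorRightHomEquiv P V (Vᘁ : A) V').symm h, ?_⟩
  apply (tensorRightHomEquiv P V (Vᘁ : A) W).injective
  rw [tensorRightHomEquiv_naturality, Equiv.apply_symm_apply, hh]

end Monoidal

/-- In a monoidal resolvent pair whose top category `A` is a tensor category (rigid monoidal
abelian), the relatively projective objects form a tensor ideal which is stable under the
duality functors: if `P` is relatively projective then so are `V ⊗ P` and `P ⊗ V` for every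
object `V`, as well as the right dual `Pᘁ` and the left dual `ᘁP`. -/
theorem relProjective_tensor_ideal [MonoidalCategory A] [MonoidalCategory B]
    [RigidCategory A] (R : ResolventPair A B) [R.U.Monoidal]
    (P : A) (hP : R.RelProjective P) :
    (∀ V : A, R.RelProjective (V ⊗ P) ∧ R.RelProjective (P ⊗ V)) ∧
      R.RelProjective (Pᘁ) ∧ R.RelProjective (ᘁP) := by
  refine ⟨fun V => ⟨relProjective_whiskerLeft R hP V, relProjective_whiskerRight R hP V⟩,
    ?_, ?_⟩
  · -- `Pᘁ` is a retract of `Pᘁ ⊗ (P ⊗ Pᘁ)`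
    refine relProjective_of_retract R
      (relProjective_whiskerLeft R (relProjective_whiskerRight R hP (Pᘁ)) (Pᘁ))
      ((ρ_ (Pᘁ : A)).inv ≫ (Pᘁ : A) ◁ η_ P (Pᘁ))
      ((α_ _ _ _).inv ≫ ε_ P (Pᘁ) ▷ (Pᘁ : A) ≫ (λ_ (Pᘁ : A)).hom) ?_
    rw [Category.assoc, ← Category.assoc ((Pᘁ : A) ◁ η_ P (Pᘁ)),
      ← Category.assoc ((Pᘁ : A) ◁ η_ P (Pᘁ) ≫ _)]
    rw [Category.assoc ((Pᘁ : A) ◁ η_ P (Pᘁ))]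
    rw [ExactPairing.coevaluation_evaluation]
    simp
  · -- `ᘁP` is a retract of `ᘁP ⊗ (P ⊗ ᘁP)`
    refine relProjective_of_retract R
      (relProjective_whiskerLeft R (relProjective_whiskerRight R hP (ᘁP)) (ᘁP))
      ((λ_ (ᘁP : A)).inv ≫ η_ (ᘁP) P ▷ (ᘁP : A) ≫ (α_ _ _ _).hom)
      ((ᘁP : A) ◁ ε_ (ᘁP) P ≫ (ρ_ (ᘁP : A)).hom) ?_
    rw [Category.assoc, Category.assoc, ← Category.assoc (η_ (ᘁP) P ▷ (ᘁP : A)),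
      ← Category.assoc (η_ (ᘁP) P ▷ (ᘁP : A) ≫ _)]
    rw [Category.assoc (η_ (ᘁP) P ▷ (ᘁP : A))]
    rw [ExactPairing.evaluation_coevaluation]
    simp
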